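/- Let P be a partial monoid and w a word over P∖{1_P}. Then: (1) the set of irreducible prefixes of w admits a maximum w_m with respect to the prefix order; (2) w_m = w if and only if w ∈ Irr(P); (3) if w ∉ Irr(P), then there is a unique 4-tuple (u,x,y,v), with u and v words over P∖{1_P} and x,y ∈ P∖{1_P}, such that w_m = u·x, w = u·x·y·v, and (x,y) ∈ dom(×). -/

import Mathlib

/-- A partial monoid: a type `P` with a partial multiplication (encoded as a total
function `mul` together with a domain predicate `dom`; the value of `mul` is only
meaningful on `dom`) and a total identity `one`. -/
structure PartialMonoid (P : Type*) where
  dom : P → P → Prop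
  mul : P → P → P
  one : P
  dom_one_right : ∀ x, dom x one
  dom_one_left : ∀ x, dom one x
  mul_one : ∀ x, mul x one = x
  one_mul : ∀ x, mul one x = x
  dom_assoc : ∀ x y z, (dom x y ∧ dom (mul x y) z) ↔ (dom y z ∧ dom x (mul y z))
  mul_assoc : ∀ x y z, dom x y → dom (mul x y) z → mul (mul x y) z = mul x (mul y z)

/-- One-step reduction `⇒_R` of the semi-Thue system `R_P` associated with the
partial monoid `P`: contract a composable factor `x·y` to `x×y`, or erase a
letter `1_P`. -/
inductive Red {P : Type*} (M : PartialMonoid P) : List P → List P → Prop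
  | mul (u v : List P) (x y : P) (h : M.dom x y) :
      Red M (u ++ x :: y :: v) (u ++ M.mul x y :: v)
  | one (u v : List P) : Red M (u ++ M.one :: v) (u ++ v)

/-- A word is irreducible (a normal form) if no one-step reduction applies to it. -/
def Irr {P : Type*} (M : PartialMonoid P) (w : List P) : Prop :=
  ¬ ∃ w', Red M w w'

/-- Confluence of a relation. -/
def Confluent {α : Type*} (r : α → α → Prop) : Prop :=
  ∀ a b c, Relation.ReflTransGen r a b → Relation.ReflTransGen r a c →
    ∃ d, Relation.ReflTransGen r b d ∧ Relation.ReflTransGen r c d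

@[simp] theorem List.chain'_nil {α : Type*} {R : α → α → Prop} : List.Chain' R [] :=
  List.isChain_nil

@[simp] theorem List.chain'_singleton {α : Type*} {R : α → α → Prop} (a : α) :
    List.Chain' R [a] :=
  List.isChain_singleton a

@[simp] theorem List.chain'_cons {α : Type*} {R : α → α → Prop} {a b : α} {l : List α} :
    List.Chain' R (a :: b :: l) ↔ R a b ∧ List.Chain' R (b :: l) :=
  List.isChain_cons_cons

namespace Aux

variable {P : Type*} (M : PartialMonoid P)

lemma chain'_iff_no_decomp (r : P → P → Prop) (u : List P) :
    u.Chain' r ↔ ∀ a x y b, u = a ++ x :: y :: b → r x y := by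
  induction u with
  | nil =>
    simp only [List.chain'_nil, true_iff]
    intro a x y b h
    exact absurd h (by simp)
  | cons x u ih =>
    cases u with
    | nil =>
      simp only [List.chain'_singleton, true_iff]
      intro a x' y b h
      rcases a with _ | ⟨c, a⟩ <;> simp_all
    | cons y t =>
      rw [List.chain'_cons, ih]
      constructor
      · rintro ⟨h1, h2⟩ a x' y' b heq
        cases a with
        | nil =>
          simp only [List.nil_append, List.cons.injEq] at heq
          obtain ⟨rfl, rfl, -⟩ := heq
          exact h1
        | cons c a' =>
          simp only [List.cons_append, List.cons.injEq] at heq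
          exact h2 a' x' y' b heq.2
      · intro h
        exact ⟨h [] x y t rfl, fun a x' y' b hb => h (x :: a) x' y' b (by rw [hb]; rfl)⟩

lemma exists_red_iff (u : List P) :
    (∃ w', Red M u w') ↔ ((∃ a x y b, u = a ++ x :: y :: b ∧ M.dom x y) ∨ M.one ∈ u) := by
  constructor
  · rintro ⟨w', hred⟩
    cases hred with
    | mul a b x y h => exact Or.inl ⟨a, x, y, b, rfl, h⟩
    | one a b => exact Or.inr (by simp)
  · rintro (⟨a, x, y, b, rfl, h⟩ | hmem)
    · exact ⟨_, Red.mul a b x y h⟩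
    · obtain ⟨s, t, rfl⟩ := List.append_of_mem hmem
      exact ⟨_, Red.one s t⟩

lemma irr_iff (u : List P) (hu : ∀ a ∈ u, a ≠ M.one) :
    Irr M u ↔ u.Chain' (fun x y => ¬ M.dom x y) := by
  rw [Irr, exists_red_iff, chain'_iff_no_decomp]
  push_neg
  constructor
  · rintro ⟨h1, -⟩ a x y b rfl
    exact h1 a x y b rfl
  · intro h
    refine ⟨fun a x y b heq => h a x y b heq, fun hmem => hu _ hmem rfl⟩

open Classical in
noncomputable def maxPre : List P → List P
  | [] => []
  | [x] => [x]
  | x :: y :: t => if M.dom x y then [x] else x :: maxPre (y :: t)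

lemma maxPre_prefix : ∀ w : List P, maxPre M w <+: w := by
  intro w
  induction w with
  | nil => simp [maxPre]
  | cons x u ih =>
    cases u with
    | nil => simp [maxPre]
    | cons y t =>
      by_cases h : M.dom x y
      · simp only [maxPre, if_pos h]
        exact ⟨y :: t, rfl⟩
      · simp only [maxPre, if_neg h]
        exact (List.cons_prefix_cons).mpr ⟨rfl, ih⟩

lemma maxPre_chain' : ∀ w : List P, (maxPre M w).Chain' (fun x y => ¬ M.dom x y) := by
  intro w
  induction w with
  | nil => simp [maxPre]
  | cons x u ih =>
    cases u with
    | nil => simp [maxPre]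
    | cons y t =>
      by_cases h : M.dom x y
      · simp [maxPre, h]
      · simp only [maxPre, if_neg h]
        cases hmp : maxPre M (y :: t) with
        | nil => simp
        | cons z s =>
          rw [List.chain'_cons]
          have hz : z = y := by
            have := maxPre_prefix M (y :: t)
            rw [hmp] at this
            obtain ⟨r, hr⟩ := this
            simpa using congrArg List.head? hr
          refine ⟨hz ▸ h, ?_⟩
          rw [← hmp]; exact ih

lemma prefix_maxPre : ∀ w u : List P, u <+: w → u.Chain' (fun x y => ¬ M.dom x y) →
    u <+: maxPre M w := by
  intro w
  induction w with
  | nil => intro u hu _; simpa [maxPre] using hu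
  | cons x w ih =>
    cases w with
    | nil => intro u hu _; simpa [maxPre] using hu
    | cons y t =>
      intro u hu hc
      by_cases h : M.dom x y
      · simp only [maxPre, if_pos h]
        rcases u with _ | ⟨c, u'⟩
        · exact List.nil_prefix
        obtain ⟨r, hr⟩ := hu
        simp only [List.cons_append, List.cons.injEq] at hr
        obtain ⟨rfl, hr2⟩ := hr
        rcases u' with _ | ⟨d, u''⟩
        · exact List.prefix_refl _
        · simp only [List.cons_append, List.cons.injEq] at hr2
          obtain ⟨rfl, -⟩ := hr2
          rw [List.chain'_cons] at hc
          exact absurd h hc.1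
      · simp only [maxPre, if_neg h]
        rcases u with _ | ⟨c, u'⟩
        · exact List.nil_prefix
        obtain ⟨r, hr⟩ := hu
        simp only [List.cons_append, List.cons.injEq] at hr
        obtain ⟨rfl, hr2⟩ := hr
        have : u' <+: maxPre M (y :: t) := ih u' ⟨r, hr2⟩ hc.tail
        exact (List.cons_prefix_cons).mpr ⟨rfl, this⟩

lemma maxPre_decomp : ∀ w : List P, ¬ (w.Chain' (fun x y => ¬ M.dom x y)) →
    ∃ u x y v, maxPre M w = u ++ [x] ∧ w = u ++ x :: y :: v ∧ M.dom x y := by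
  intro w
  induction w with
  | nil => intro h; exact absurd List.chain'_nil h
  | cons x w ih =>
    cases w with
    | nil => intro h; exact absurd (List.chain'_singleton x) h
    | cons y t =>
      intro h
      by_cases hd : M.dom x y
      · exact ⟨[], x, y, t, by simp [maxPre, hd], rfl, hd⟩
      · rw [List.chain'_cons] at h
        push_neg at h
        obtain ⟨u, x', y', v, h1, h2, h3⟩ := ih (h hd)
        exact ⟨x :: u, x', y', v, by simp [maxPre, hd, h1], by simp [h2], h3⟩

theorem max_irreducible_prefix_aux {P : Type*} (M : PartialMonoid P)
    (w : List P) (hw : ∀ a ∈ w, a ≠ M.one) :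
    ∃ wm : List P,
      (wm <+: w ∧ Irr M wm ∧ ∀ u : List P, u <+: w → Irr M u → u <+: wm) ∧
      (wm = w ↔ Irr M w) ∧
      (¬ Irr M w →
        ∃! t : List P × P × P × List P,
          (∀ a ∈ t.1, a ≠ M.one) ∧ t.2.1 ≠ M.one ∧ t.2.2.1 ≠ M.one ∧
          (∀ a ∈ t.2.2.2, a ≠ M.one) ∧
          wm = t.1 ++ [t.2.1] ∧
          w = t.1 ++ t.2.1 :: t.2.2.1 :: t.2.2.2 ∧
          M.dom t.2.1 t.2.2.1) := by
  refine ⟨maxPre M w, ⟨maxPre_prefix M w, ?_, ?_⟩, ?_, ?_⟩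
  · rw [irr_iff M _ (fun a ha => hw a ((maxPre_prefix M w).subset ha))]
    exact maxPre_chain' M w
  · intro u hu hirr
    exact prefix_maxPre M w u hu ((irr_iff M u (fun a ha => hw a (hu.subset ha))).mp hirr)
  · rw [irr_iff M w hw]
    constructor
    · intro h; rw [← h]; exact maxPre_chain' M w
    · intro h
      exact (maxPre_prefix M w).sublist.antisymm (prefix_maxPre M w w (List.prefix_refl w) h).sublist
  · intro hirr
    rw [irr_iff M w hw] at hirr
    obtain ⟨u, x, y, v, h1, h2, h3⟩ := maxPre_decomp M w hirr
    refine ⟨(u, x, y, v), ⟨?_, ?_, ?_, ?_, h1, h2, h3⟩, ?_⟩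
    · intro a ha; exact hw a (by rw [h2]; simp [ha])
    · exact hw x (by rw [h2]; simp)
    · exact hw y (by rw [h2]; simp)
    · intro a ha; exact hw a (by rw [h2]; simp [ha])
    · rintro ⟨u', x', y', v'⟩ ⟨-, -, -, -, g1, g2, -⟩
      simp only at g1 g2 ⊢
      rw [h1] at g1
      have hu : u' = u := by
        have := congrArg List.dropLast g1
        simpa using this.symm
      subst hu
      have hx : x' = x := by
        have := List.append_cancel_left g1
        simpa using this.symm
      subst hx
      rw [h2] at g2
      have := List.append_cancel_left g2
      simp only [List.cons.injEq] at this
      obtain ⟨-, rfl, rfl⟩ := this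
      rfl


end Aux

/-- For a word `w` over `P∖{1_P}`:
(1) the set of irreducible prefixes of `w` has a maximum `wₘ` for the prefix order;
(2) `wₘ = w` iff `w` is irreducible;
(3) if `w` is not irreducible, there is a unique 4-tuple `(u,x,y,v)`, with `u,v` words
over `P∖{1_P}` and `x,y ∈ P∖{1_P}`, such that `wₘ = u·x`, `w = u·x·y·v` and
`(x,y) ∈ dom(×)`. -/
theorem max_irreducible_prefix {P : Type*} (M : PartialMonoid P)
    (w : List P) (hw : ∀ a ∈ w, a ≠ M.one) :
    ∃ wm : List P,
      (wm <+: w ∧ Irr M wm ∧ ∀ u : List P, u <+: w → Irr M u → u <+: wm) ∧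
      (wm = w ↔ Irr M w) ∧
      (¬ Irr M w →
        ∃! t : List P × P × P × List P,
          (∀ a ∈ t.1, a ≠ M.one) ∧ t.2.1 ≠ M.one ∧ t.2.2.1 ≠ M.one ∧
          (∀ a ∈ t.2.2.2, a ≠ M.one) ∧
          wm = t.1 ++ [t.2.1] ∧
          w = t.1 ++ t.2.1 :: t.2.2.1 :: t.2.2.2 ∧
          M.dom t.2.1 t.2.2.1) :=
  Aux.max_irreducible_prefix_aux M w hw
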